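/- Let G be a connected P5-free chordal bipartite graph with bipartition (A,B) and maximum biclique (A1,B1), and let A2 = A \ A1 = {u_1,...,u_p} ordered so that deg(u_1) ≤ deg(u_2) ≤ ... ≤ deg(u_p). Then N(u_1) ⊆ N(u_2) ⊆ ... ⊆ N(u_p) (the Nested Neighborhood Ordering). -/

import Mathlib

open SimpleGraph Finset

variable {V : Type*}

/-- `(A, B)` is a bipartition of the graph `G`. -/
def IsBipartitionOf (G : SimpleGraph V) (A B : Finset V) : Prop :=
  Disjoint A B ∧ (∀ v : V, v ∈ A ∨ v ∈ B) ∧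
    ∀ ⦃x y : V⦄, G.Adj x y → (x ∈ A ∧ y ∈ B) ∨ (x ∈ B ∧ y ∈ A)

/-- `G` has no induced path on `n` vertices. -/
def PFree (n : ℕ) (G : SimpleGraph V) : Prop :=
  ∀ f : Fin n → V, Function.Injective f →
    ¬ (∀ i j : Fin n, G.Adj (f i) (f j) ↔ ((i : ℕ) + 1 = (j : ℕ) ∨ (j : ℕ) + 1 = (i : ℕ)))

/-- Every cycle of length at least 6 has a chord. -/
def ChordalBipartite (G : SimpleGraph V) : Prop :=
  ∀ (v : V) (c : G.Walk v v), c.IsCycle → 6 ≤ c.length →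
    ∃ x y : V, x ∈ c.support ∧ y ∈ c.support ∧ G.Adj x y ∧ s(x, y) ∉ c.edges

/-- `(A1, B1)` is a maximal biclique of `G` within the bipartition `(A, B)`:
it is a complete bipartite subgraph and no vertex can be added to either side. -/
def IsMaximalBiclique (G : SimpleGraph V) (A B A1 B1 : Finset V) : Prop :=
  A1 ⊆ A ∧ B1 ⊆ B ∧ (∀ x ∈ A1, ∀ y ∈ B1, G.Adj x y) ∧
    (∀ x ∈ A, (∀ y ∈ B1, G.Adj x y) → x ∈ A1) ∧
    (∀ y ∈ B, (∀ x ∈ A1, G.Adj x y) → y ∈ B1)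


section Helpers

variable {V : Type*} {G : SimpleGraph V}

private lemma myDropLength {a b : V} (p : G.Walk a b) (n : ℕ) :
    (p.drop n).length = p.length - n := by
  induction p generalizing n with
  | nil => simp [SimpleGraph.Walk.drop]
  | cons h q ih =>
    cases n with
    | zero => simp [SimpleGraph.Walk.drop]
    | succ n => exact SimpleGraph.Walk.drop_length _ _

private lemma myGetVertInj {a b : V} (p : G.Walk a b) (hp : p.IsPath) :
    ∀ i j, i ≤ p.length → j ≤ p.length → p.getVert i = p.getVert j → i = j := by
  induction p with
  | nil => intro i j hi hj _; simp only [SimpleGraph.Walk.length_nil] at hi hj; omega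
  | cons h q ih =>
    intro i j hi hj heq
    rw [SimpleGraph.Walk.cons_isPath_iff] at hp
    obtain ⟨hq, hnot⟩ := hp
    match i, j with
    | 0, 0 => rfl
    | 0, (k + 1) =>
      exact absurd (SimpleGraph.Walk.mem_support_iff_exists_getVert.mpr
        ⟨k, heq.symm, by simpa using hj⟩) hnot
    | (k + 1), 0 =>
      exact absurd (SimpleGraph.Walk.mem_support_iff_exists_getVert.mpr
        ⟨k, heq, by simpa using hi⟩) hnot
    | (k + 1), (l + 1) =>
      exact congrArg Nat.succ (ih hq k l (by simpa using hi) (by simpa using hj) heq)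

private lemma myNoChord {a b : V} (p : G.Walk a b) (hlen : p.length = G.dist a b)
    {i j : ℕ} (hij : i + 2 ≤ j) (hj : j ≤ p.length)
    (hadj : G.Adj (p.getVert i) (p.getVert j)) : False := by
  have hi : i ≤ p.length := by omega
  have h1 : p.reverse.getVert (p.length - i) = p.getVert i := by
    rw [SimpleGraph.Walk.getVert_reverse]
    congr 1; omega
  let q1 : G.Walk (p.getVert i) a := (p.reverse.drop (p.length - i)).copy h1 rfl
  have hq1 : q1.length = i := by
    simp only [q1, SimpleGraph.Walk.length_copy, myDropLength,
      SimpleGraph.Walk.length_reverse]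
    omega
  let w : G.Walk a b := q1.reverse.append (SimpleGraph.Walk.cons hadj (p.drop j))
  have hw : w.length = i + 1 + (p.length - j) := by
    simp only [w, SimpleGraph.Walk.length_append, SimpleGraph.Walk.length_reverse,
      SimpleGraph.Walk.length_cons, myDropLength, hq1]
    omega
  have := SimpleGraph.dist_le w
  omega

private lemma myDistLeThree (hconn : G.Connected) (hp5 : PFree 5 G) (a b : V) :
    G.dist a b ≤ 3 := by
  by_contra hlt
  push_neg at hlt
  obtain ⟨p, hpath, hlen⟩ := hconn.exists_path_of_dist a b
  have h4 : 4 ≤ p.length := by omega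
  set f : Fin 5 → V := fun k => p.getVert k with hf
  have hinj : Function.Injective f := by
    intro i j hij
    exact Fin.ext (myGetVertInj p hpath i j (by omega) (by omega) hij)
  refine hp5 f hinj ?_
  intro i j
  constructor
  · intro hadj
    by_contra hc
    push_neg at hc
    rcases lt_trichotomy (i : ℕ) (j : ℕ) with h | h | h
    · exact myNoChord p hlen (by omega) (by omega) hadj
    · exact hadj.ne (by simp [hf, h])
    · exact myNoChord p hlen (i := (j : ℕ)) (j := (i : ℕ)) (by omega) (by omega) hadj.symm
  · rintro (h | h)
    · show G.Adj (p.getVert i) (p.getVert j)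
      rw [show ((j : ℕ)) = (i : ℕ) + 1 from h.symm]
      exact p.adj_getVert_succ (by omega)
    · show G.Adj (p.getVert i) (p.getVert j)
      rw [show ((i : ℕ)) = (j : ℕ) + 1 from h.symm]
      exact (p.adj_getVert_succ (by omega)).symm

end Helpers

section Helpers2

variable {V : Type*} {G : SimpleGraph V} {A B : Finset V}

private lemma myParity (hbip : IsBipartitionOf G A B) :
    ∀ {a b : V} (w : G.Walk a b), ((a ∈ A ↔ b ∈ A) ↔ Even w.length) := by
  intro a b w
  induction w with
  | nil => simp
  | @cons a c b h q ih =>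
    have hflip : a ∈ A ↔ ¬ (c ∈ A) := by
      rcases hbip.2.2 h with ⟨ha, hc⟩ | ⟨ha, hc⟩
      · constructor
        · intro _ hcA; exact (Finset.disjoint_left.mp hbip.1 hcA) hc
        · intro _; exact ha
      · constructor
        · intro haA; exact absurd ha (Finset.disjoint_left.mp hbip.1 haA)
        · intro hnc; exact absurd hc hnc
    rw [SimpleGraph.Walk.length_cons, Nat.even_add_one, ← ih]
    tauto

private lemma myCommonNbr (hconn : G.Connected) (hbip : IsBipartitionOf G A B)
    (hp5 : PFree 5 G) {a b : V} (ha : a ∈ A) (hb : b ∈ A) (hab : a ≠ b) :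
    ∃ w, G.Adj a w ∧ G.Adj b w := by
  obtain ⟨p, hpath, hlen⟩ := hconn.exists_path_of_dist a b
  have heven : Even p.length := (myParity hbip p).mp (by simp [ha, hb])
  have hpos : 0 < G.dist a b := hconn.pos_dist_of_ne hab
  have hle : G.dist a b ≤ 3 := myDistLeThree hconn hp5 a b
  have h2 : p.length = 2 := by
    obtain ⟨k, hk⟩ := heven; omega
  refine ⟨p.getVert 1, ?_, ?_⟩
  · have := p.adj_getVert_succ (i := 0) (by omega)
    rwa [SimpleGraph.Walk.getVert_zero] at this
  · have := p.adj_getVert_succ (i := 1) (by omega)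
    rw [show (1 : ℕ) + 1 = p.length by omega, SimpleGraph.Walk.getVert_length] at this
    exact this.symm

end Helpers2

theorem stmt3 [Fintype V] [DecidableEq V] (G : SimpleGraph V) [DecidableRel G.Adj]
    (A B A1 B1 : Finset V) {p : ℕ} (u : Fin p → V)
    (hconn : G.Connected) (hbip : IsBipartitionOf G A B)
    (hcb : ChordalBipartite G) (hp5 : PFree 5 G)
    (hmax : IsMaximalBiclique G A B A1 B1)
    -- `u` enumerates `A \ A1` in non-decreasing degree order (NNO)
    (hu : Function.Injective u) (huA : ∀ i, u i ∈ A \ A1)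
    (huAll : ∀ x ∈ A \ A1, ∃ i, u i = x)
    (humono : ∀ i j : Fin p, i ≤ j → G.degree (u i) ≤ G.degree (u j))
 :
    ∀ i j : Fin p, i ≤ j → G.neighborFinset (u i) ⊆ G.neighborFinset (u j) := by
  have hdisj := Finset.disjoint_left.mp hbip.1
  have hsideB : ∀ {v w : V}, v ∈ A → G.Adj v w → w ∈ B := by
    intro v w hv h
    rcases hbip.2.2 h with ⟨_, hw⟩ | ⟨hv', _⟩
    · exact hw
    · exact absurd hv' (hdisj hv)
  have hnoBB : ∀ {v w : V}, v ∈ B → w ∈ B → ¬ G.Adj v w := by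
    intro v w hv hw h
    rcases hbip.2.2 h with ⟨hv', _⟩ | ⟨_, hw'⟩
    · exact hdisj hv' hv
    · exact hdisj hw' hw
  have hnoAA : ∀ {v w : V}, v ∈ A → w ∈ A → ¬ G.Adj v w := by
    intro v w hv hw h
    rcases hbip.2.2 h with ⟨_, hw'⟩ | ⟨hv', _⟩
    · exact hdisj hw hw'
    · exact hdisj hv hv'
  intro i j hij
  rcases eq_or_lt_of_le hij with rfl | hltij
  · exact subset_rfl
  have hne : u i ≠ u j := fun h => hltij.ne (hu h)
  have hai : u i ∈ A := (Finset.mem_sdiff.mp (huA i)).1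
  have haj : u j ∈ A := (Finset.mem_sdiff.mp (huA j)).1
  by_contra hsub
  obtain ⟨x, hxi, hxj⟩ := Finset.not_subset.mp hsub
  obtain ⟨y, hyj, hyi⟩ : ∃ y, y ∈ G.neighborFinset (u j) ∧ y ∉ G.neighborFinset (u i) := by
    by_contra h
    push_neg at h
    have hss : G.neighborFinset (u j) ⊆ G.neighborFinset (u i) := fun z hz => h z hz
    have heq := Finset.eq_of_subset_of_card_le hss (humono i j hij)
    rw [heq] at hxj
    exact hxj hxi
  rw [SimpleGraph.mem_neighborFinset] at hxi hyj hxj hyi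
  obtain ⟨w, hwi, hwj⟩ := myCommonNbr hconn hbip hp5 hai haj hne
  have hxB : x ∈ B := hsideB hai hxi
  have hyB : y ∈ B := hsideB haj hyj
  have hwB : w ∈ B := hsideB hai hwi
  set f : Fin 5 → V := ![x, u i, w, u j, y] with hf
  have hxw : x ≠ w := fun h => hxj (h ▸ hwj)
  have hxy : x ≠ y := fun h => hyi (h ▸ hxi)
  have hwy : w ≠ y := fun h => hyi (h ▸ hwi)
  have hinj : Function.Injective f := by
    intro s t hst
    fin_cases s <;> fin_cases t <;> try rfl
    all_goals simp only [hf] at hst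
    all_goals simp at hst
    all_goals
      first
        | exact absurd hst hxw | exact absurd hst hxy | exact absurd hst hwy
        | exact absurd hst hxw.symm | exact absurd hst hxy.symm | exact absurd hst hwy.symm
        | exact absurd hst hne | exact absurd hst hne.symm
        | exact absurd hst (fun h => hdisj hai (h ▸ hxB))
        | exact absurd hst (fun h => hdisj hai (h ▸ hwB))
        | exact absurd hst (fun h => hdisj hai (h ▸ hyB))
        | exact absurd hst (fun h => hdisj haj (h ▸ hxB))
        | exact absurd hst (fun h => hdisj haj (h ▸ hwB))
        | exact absurd hst (fun h => hdisj haj (h ▸ hyB))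
        | exact absurd hst.symm (fun h => hdisj hai (h ▸ hxB))
        | exact absurd hst.symm (fun h => hdisj hai (h ▸ hwB))
        | exact absurd hst.symm (fun h => hdisj hai (h ▸ hyB))
        | exact absurd hst.symm (fun h => hdisj haj (h ▸ hxB))
        | exact absurd hst.symm (fun h => hdisj haj (h ▸ hwB))
        | exact absurd hst.symm (fun h => hdisj haj (h ▸ hyB))
  refine hp5 f hinj ?_
  intro s t
  fin_cases s <;> fin_cases t <;>
    simp only [hf] <;> simp <;>
    first
      | exact G.loopless _
      | exact hxi.symm | exact hxi | exact hwi | exact hwi.symm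
      | exact hwj | exact hwj.symm | exact hyj | exact hyj.symm
      | exact hnoBB hxB hwB | exact hnoBB hwB hxB
      | exact hnoBB hxB hyB | exact hnoBB hyB hxB
      | exact hnoBB hwB hyB | exact hnoBB hyB hwB
      | exact hnoAA hai haj | exact hnoAA haj hai
      | exact hxj | exact fun h => hxj h.symm
      | exact hyi | exact fun h => hyi h.symm
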